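/- For an alternating function f ∈ L²_a(X^{ℓ+1}) and K ≡ 1, the boundary operator has the simplified form ∂f(x₀,…,x_{ℓ-1}) = (ℓ+1) ∫_X f(t,x₀,…,x_{ℓ-1}) dμ(t), and the Laplacian satisfies Δf(x₀,…,x_ℓ) = (ℓ+2) f(x₀,…,x_ℓ) − (1/(ℓ+1)) Σᵢ ∂f(x₀,…,x̂ᵢ,…,x_ℓ). -/

import Mathlib

open MeasureTheory

/-- The Alexander–Spanier coboundary for the constant kernel `K ≡ 1`:
`δf(x₀,…,x_ℓ) = Σᵢ (-1)ⁱ f(x₀,…,x̂ᵢ,…,x_ℓ)`. -/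
noncomputable def coboundary1 {X : Type*} (n : ℕ) (f : (Fin n → X) → ℝ) :
    (Fin (n + 1) → X) → ℝ :=
  fun x => ∑ i : Fin (n + 1), (-1 : ℝ) ^ (i : ℕ) * f (x ∘ i.succAbove)

/-- The boundary operator `∂ = δ*` for `K ≡ 1`. -/
noncomputable def boundary0 {X : Type*} [MeasurableSpace X] (μ : Measure X)
    (n : ℕ) (g : (Fin (n + 1) → X) → ℝ) : (Fin n → X) → ℝ :=
  fun x => ∑ i : Fin (n + 1),
    (-1 : ℝ) ^ (i : ℕ) * ∫ t, g (i.insertNth t x) ∂μ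

namespace BLaux

lemma coe_succAbove' {m : ℕ} (i : Fin (m + 1)) (k : Fin m) :
    ((i.succAbove k : Fin (m + 1)) : ℕ) =
      if (k : ℕ) < (i : ℕ) then (k : ℕ) else (k : ℕ) + 1 := by
  rcases Nat.lt_or_ge (k : ℕ) (i : ℕ) with h | h
  · rw [Fin.succAbove_of_castSucc_lt _ _ (by simpa [Fin.lt_def] using h)]
    simp [h]
  · rw [Fin.succAbove_of_le_castSucc _ _ (by simpa [Fin.le_def] using h)]
    simp [Nat.not_lt.mpr h]

/-- Position of `t` after removing coordinate `i.succAbove k` from `insertNth i t x`. -/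
def pidx {m : ℕ} (i : Fin (m + 2)) (k : Fin (m + 1)) : Fin (m + 1) :=
  ⟨if (k : ℕ) < (i : ℕ) then (i : ℕ) - 1 else (i : ℕ), by
    have hk := k.isLt; have hi := i.isLt; split_ifs with h <;> omega⟩

lemma succAbove_pidx_self {m : ℕ} (i : Fin (m + 2)) (k : Fin (m + 1)) :
    (i.succAbove k).succAbove (pidx i k) = i := by
  apply Fin.ext
  have hk := k.isLt; have hi := i.isLt
  simp only [coe_succAbove', pidx, Fin.val_mk]
  split_ifs <;> omega

lemma succAbove_pidx_succAbove {m : ℕ} (i : Fin (m + 2)) (k : Fin (m + 1)) (q : Fin m) :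
    (i.succAbove k).succAbove ((pidx i k).succAbove q) = i.succAbove (k.succAbove q) := by
  apply Fin.ext
  have hk := k.isLt; have hi := i.isLt; have hq := q.isLt
  simp only [coe_succAbove', pidx, Fin.val_mk]
  split_ifs <;> omega

lemma removeNth_insertNth' {X : Type*} {m : ℕ} (i : Fin (m + 2)) (k : Fin (m + 1)) (t : X)
    (x : Fin (m + 1) → X) :
    (Fin.insertNth (α := fun _ => X) i t x) ∘ (i.succAbove k).succAbove =
      Fin.insertNth (α := fun _ => X) (pidx i k) t (x ∘ k.succAbove) := by
  symm
  rw [Fin.insertNth_eq_iff]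
  constructor
  · rw [Function.comp_apply, succAbove_pidx_self, Fin.insertNth_apply_same]
  · funext q
    simp only [Fin.removeNth, Function.comp_apply, succAbove_pidx_succAbove,
      Fin.insertNth_apply_succAbove]

lemma insertNth_eq_cons_comp_cycleRange {X : Type*} {m : ℕ} (i : Fin (m + 1)) (t : X)
    (z : Fin m → X) :
    Fin.insertNth (α := fun _ => X) i t z = (Fin.cons t z) ∘ ⇑i.cycleRange := by
  funext l
  rcases eq_or_ne l i with rfl | h
  · simp [Fin.insertNth_apply_same, Fin.cycleRange_self]
  · obtain ⟨j, rfl⟩ := Fin.exists_succAbove_eq h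
    simp [Fin.insertNth_apply_succAbove, Fin.cycleRange_succAbove]

lemma alt_insertNth {X : Type*} {m : ℕ} (f : (Fin (m + 1) → X) → ℝ)
    (halt : ∀ (σ : Equiv.Perm (Fin (m + 1))) (x : Fin (m + 1) → X),
      f (x ∘ σ) = ((Equiv.Perm.sign σ : ℤ) : ℝ) * f x)
    (i : Fin (m + 1)) (t : X) (z : Fin m → X) :
    f (Fin.insertNth (α := fun _ => X) i t z) = (-1 : ℝ) ^ (i : ℕ) * f (Fin.cons t z) := by
  rw [insertNth_eq_cons_comp_cycleRange, halt i.cycleRange (Fin.cons t z),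
    Fin.sign_cycleRange]
  norm_num

lemma sign_combo {m : ℕ} (i : Fin (m + 2)) (k : Fin (m + 1)) :
    (-1 : ℝ) ^ (i : ℕ) * ((-1 : ℝ) ^ ((i.succAbove k : Fin (m + 2)) : ℕ) *
      (-1 : ℝ) ^ ((pidx i k : Fin (m + 1)) : ℕ)) = -(-1 : ℝ) ^ (k : ℕ) := by
  have hk := k.isLt; have hi := i.isLt
  rw [coe_succAbove']
  simp only [pidx, Fin.val_mk]
  rw [← pow_add, ← pow_add]
  split_ifs with h
  · rw [show (i : ℕ) + ((k : ℕ) + ((i : ℕ) - 1)) = 2 * ((i : ℕ) - 1) + ((k : ℕ) + 1) from by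
      omega, pow_add, pow_mul, neg_one_sq, one_pow, one_mul, pow_succ]
    ring
  · rw [show (i : ℕ) + ((k : ℕ) + 1 + (i : ℕ)) = 2 * (i : ℕ) + ((k : ℕ) + 1) from by
      omega, pow_add, pow_mul, neg_one_sq, one_pow, one_mul, pow_succ]
    ring

end BLaux

theorem boundary_and_laplacian_on_alternating
    {X : Type*} [MeasurableSpace X] (μ : Measure X) [IsProbabilityMeasure μ]
    (n : ℕ) (f : (Fin (n + 2) → X) → ℝ)
    (halt : ∀ (σ : Equiv.Perm (Fin (n + 2))) (x : Fin (n + 2) → X),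
      f (x ∘ σ) = ((Equiv.Perm.sign σ : ℤ) : ℝ) * f x)
    (hf : MemLp f 2 (Measure.pi fun _ : Fin (n + 2) => μ))
    (hInt : ∀ z : Fin (n + 1) → X, Integrable (fun t => f (Fin.cons t z)) μ) :
    -- simplified form of the boundary operator
    (∀ z : Fin (n + 1) → X,
      boundary0 μ (n + 1) f z = (n + 2 : ℝ) * ∫ t, f (Fin.cons t z) ∂μ) ∧
    -- formula for the Laplacian `Δ f = ∂(δ f) + δ(∂ f)`
    (∀ x : Fin (n + 2) → X,
      boundary0 μ (n + 2) (coboundary1 (n + 2) f) x +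
          coboundary1 (n + 1) (boundary0 μ (n + 1) f) x =
        (n + 3 : ℝ) * f x -
          (1 / (n + 2 : ℝ)) * ∑ i : Fin (n + 2),
            (-1 : ℝ) ^ (i : ℕ) * boundary0 μ (n + 1) f (x ∘ i.succAbove)) := by
  have part1 : ∀ z : Fin (n + 1) → X,
      boundary0 μ (n + 1) f z = (n + 2 : ℝ) * ∫ t, f (Fin.cons t z) ∂μ := by
    intro z
    unfold boundary0
    have hterm : ∀ i : Fin (n + 2),
        (-1 : ℝ) ^ (i : ℕ) * ∫ t, f (i.insertNth t z) ∂μ = ∫ t, f (Fin.cons t z) ∂μ := by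
      intro i
      simp only [BLaux.alt_insertNth f halt]
      rw [MeasureTheory.integral_const_mul, ← mul_assoc, ← pow_add]
      rw [show (i : ℕ) + (i : ℕ) = 2 * (i : ℕ) from by omega, pow_mul, neg_one_sq, one_pow,
        one_mul]
    rw [Finset.sum_congr rfl fun i _ => hterm i, Finset.sum_const, Finset.card_univ,
      Fintype.card_fin, nsmul_eq_mul]
    push_cast
    ring
  refine ⟨part1, fun x => ?_⟩
  -- notation
  set g : Fin (n + 2) → ℝ := fun k => ∫ t, f (Fin.cons t (x ∘ k.succAbove)) ∂μ with hg
  set T : ℝ := ∑ k : Fin (n + 2), (-1 : ℝ) ^ (k : ℕ) * g k with hT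
  have hLHS2 : coboundary1 (n + 1) (boundary0 μ (n + 1) f) x = (n + 2 : ℝ) * T := by
    unfold coboundary1
    rw [hT, Finset.mul_sum]
    refine Finset.sum_congr rfl fun i _ => ?_
    rw [part1 (x ∘ i.succAbove)]
    ring
  have hRHSsum : ∑ i : Fin (n + 2), (-1 : ℝ) ^ (i : ℕ)
        * boundary0 μ (n + 1) f (x ∘ i.succAbove) = (n + 2 : ℝ) * T := by
    rw [hT, Finset.mul_sum]
    refine Finset.sum_congr rfl fun i _ => ?_
    rw [part1 (x ∘ i.succAbove)]
    ring
  have hLHS1 : boundary0 μ (n + 2) (coboundary1 (n + 2) f) x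
      = (n + 3 : ℝ) * f x - (n + 3 : ℝ) * T := by
    unfold boundary0
    have hterm : ∀ i : Fin (n + 3),
        (-1 : ℝ) ^ (i : ℕ) * ∫ t, coboundary1 (n + 2) f (i.insertNth t x) ∂μ
          = f x - T := by
      intro i
      have hfun : (fun t => coboundary1 (n + 2) f (i.insertNth t x))
          = fun t => (-1 : ℝ) ^ (i : ℕ) * f x
              + ∑ k : Fin (n + 2), ((-1 : ℝ) ^ ((i.succAbove k : Fin (n + 3)) : ℕ) *
                  ((-1 : ℝ) ^ ((BLaux.pidx i k : Fin (n + 2)) : ℕ) *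
                    f (Fin.cons t (x ∘ k.succAbove)))) := by
        funext t
        unfold coboundary1
        rw [Fin.sum_univ_succAbove _ i]
        congr 1
        · rw [Fin.insertNth_comp_succAbove]
        · refine Finset.sum_congr rfl fun k _ => ?_
          rw [BLaux.removeNth_insertNth', BLaux.alt_insertNth f halt]
      have hint : ∀ k : Fin (n + 2), Integrable (fun t =>
          (-1 : ℝ) ^ ((i.succAbove k : Fin (n + 3)) : ℕ) *
            ((-1 : ℝ) ^ ((BLaux.pidx i k : Fin (n + 2)) : ℕ) *
              f (Fin.cons t (x ∘ k.succAbove)))) μ :=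
        fun k => ((hInt _).const_mul _).const_mul _
      rw [hfun, integral_add (integrable_const _)
          (integrable_finset_sum _ fun k _ => hint k),
        integral_const, integral_finset_sum _ fun k _ => hint k]
      simp only [measure_univ, probReal_univ, ENNReal.toReal_one, smul_eq_mul, one_mul,
        MeasureTheory.integral_const_mul]
      rw [mul_add, ← mul_assoc, ← pow_add,
        show (i : ℕ) + (i : ℕ) = 2 * (i : ℕ) from by omega, pow_mul, neg_one_sq, one_pow,
        one_mul, Finset.mul_sum]
      have hstep : ∀ k : Fin (n + 2),
          (-1 : ℝ) ^ (i : ℕ) * ((-1 : ℝ) ^ ((i.succAbove k : Fin (n + 3)) : ℕ) *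
              ((-1 : ℝ) ^ ((BLaux.pidx i k : Fin (n + 2)) : ℕ) *
                ∫ t, f (Fin.cons t (x ∘ k.succAbove)) ∂μ))
            = -((-1 : ℝ) ^ (k : ℕ) * g k) := by
        intro k
        have hgk : g k = ∫ t, f (Fin.cons t (x ∘ k.succAbove)) ∂μ := rfl
        rw [hgk]
        have hc := BLaux.sign_combo i k
        linear_combination (∫ t, f (Fin.cons t (x ∘ k.succAbove)) ∂μ) * hc
      rw [Finset.sum_congr rfl fun k _ => hstep k, Finset.sum_neg_distrib, hT,
        sub_eq_add_neg]
    rw [Finset.sum_congr rfl fun i _ => hterm i, Finset.sum_const, Finset.card_univ,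
      Fintype.card_fin, nsmul_eq_mul]
    push_cast
    ring
  rw [hLHS1, hLHS2, hRHSsum]
  have hne : (n + 2 : ℝ) ≠ 0 := by positivity
  field_simp
  ring
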